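/- Let A and B be bounded nonnegative self-adjoint operators on a Hilbert space, and suppose there is C ≥ 0 with ⟨g, (AB + BA) g⟩ + C‖g‖² ≥ 0 for all g. Then for every z ≥ 0 and every g, ⟨g, A·B(z+B)^{−1}·A g⟩ + ⟨g, B·A(z+A)^{−1}·B g⟩ + ⟨g, (AB + BA) g⟩ + C⟨g, (z + A + B) g⟩ ≥ 0, where additionally A + B ≥ 1 is assumed. -/
import Mathlib


open scoped InnerProductSpace

/-- Auxiliary: if `z ≥ 0`, `B ≥ 0`, and `(z + B) RB = 1`, then `⟪h, B (RB h)⟫` has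
nonnegative real part. -/
lemma aux_pos_resolvent
    {H : Type*} [NormedAddCommGroup H] [InnerProductSpace ℂ H]
    (B RB : H →L[ℂ] H)
    (hBpos : ∀ g : H, 0 ≤ (⟪g, B g⟫_ℂ).re)
    (z : ℝ) (hz : 0 ≤ z)
    (hRB₁ : ∀ g : H, (z : ℂ) • RB g + B (RB g) = g)
    (h : H) : 0 ≤ (⟪h, B (RB h)⟫_ℂ).re := by
  set k := RB h with hkdef
  have hk : (z : ℂ) • k + B k = h := hRB₁ h
  have : ⟪h, B k⟫_ℂ = (starRingEnd ℂ) (z : ℂ) * ⟪k, B k⟫_ℂ + ⟪B k, B k⟫_ℂ := by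
    rw [← hk, inner_add_left, inner_smul_left]
  rw [this]
  have h1 : ((starRingEnd ℂ) (z : ℂ) * ⟪k, B k⟫_ℂ).re = z * (⟪k, B k⟫_ℂ).re := by
    simp [Complex.conj_ofReal, Complex.mul_re]
  rw [Complex.add_re, h1]
  have h2 : 0 ≤ (⟪B k, B k⟫_ℂ).re := by simpa using inner_self_nonneg (𝕜 := ℂ) (x := B k)
  have h3 := hBpos k
  positivity

/-- key positivity step. If `A, B ≥ 0` are bounded self-adjoint with
`A + B ≥ 1` and `⟨g,(AB+BA)g⟩ + C‖g‖² ≥ 0`, then for every `z ≥ 0` (with the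
resolvents `(z+A)⁻¹`, `(z+B)⁻¹` given as two-sided inverses `RA`, `RB`)
`⟨g, A B(z+B)⁻¹ A g⟩ + ⟨g, B A(z+A)⁻¹ B g⟩ + ⟨g,(AB+BA)g⟩ + C⟨g,(z+A+B)g⟩ ≥ 0`. -/
theorem positivity_resolvent_cross_terms
    {H : Type*} [NormedAddCommGroup H] [InnerProductSpace ℂ H] [CompleteSpace H]
    (A B : H →L[ℂ] H) (hA : IsSelfAdjoint A) (hB : IsSelfAdjoint B)
    (hApos : ∀ g : H, 0 ≤ (⟪g, A g⟫_ℂ).re) (hBpos : ∀ g : H, 0 ≤ (⟪g, B g⟫_ℂ).re)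
    (hAB_ge_one : ∀ g : H, ‖g‖ ^ 2 ≤ (⟪g, A g + B g⟫_ℂ).re)
    (C : ℝ) (hC : 0 ≤ C)
    (hcross : ∀ g : H, 0 ≤ (⟪g, A (B g) + B (A g)⟫_ℂ).re + C * ‖g‖ ^ 2)
    (z : ℝ) (hz : 0 ≤ z)
    (RA RB : H →L[ℂ] H)
    (hRA₁ : ∀ g : H, (z : ℂ) • RA g + A (RA g) = g)
    (hRA₂ : ∀ g : H, RA ((z : ℂ) • g + A g) = g)
    (hRB₁ : ∀ g : H, (z : ℂ) • RB g + B (RB g) = g)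
    (hRB₂ : ∀ g : H, RB ((z : ℂ) • g + B g) = g)
    (g : H) :
    0 ≤ (⟪g, A (B (RB (A g)))⟫_ℂ).re + (⟪g, B (A (RA (B g)))⟫_ℂ).re
        + (⟪g, A (B g) + B (A g)⟫_ℂ).re
        + C * (z * ‖g‖ ^ 2 + (⟪g, A g⟫_ℂ).re + (⟪g, B g⟫_ℂ).re) := by
  have hAsym := ContinuousLinearMap.isSelfAdjoint_iff_isSymmetric.mp hA
  have hBsym := ContinuousLinearMap.isSelfAdjoint_iff_isSymmetric.mp hB
  -- first term
  have t1 : 0 ≤ (⟪g, A (B (RB (A g)))⟫_ℂ).re := by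
    have e : ⟪g, A (B (RB (A g)))⟫_ℂ = ⟪A g, B (RB (A g))⟫_ℂ := (hAsym g _).symm
    rw [e]
    exact aux_pos_resolvent B RB hBpos z hz hRB₁ (A g)
  have t2 : 0 ≤ (⟪g, B (A (RA (B g)))⟫_ℂ).re := by
    have e : ⟪g, B (A (RA (B g)))⟫_ℂ = ⟪B g, A (RA (B g))⟫_ℂ := (hBsym g _).symm
    rw [e]
    exact aux_pos_resolvent A RA hApos z hz hRA₁ (B g)
  have t3 := hcross g
  have t4 : ‖g‖ ^ 2 ≤ (⟪g, A g⟫_ℂ).re + (⟪g, B g⟫_ℂ).re := by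
    have := hAB_ge_one g
    rwa [inner_add_right, Complex.add_re] at this
  have t5 : 0 ≤ z * ‖g‖ ^ 2 := by positivity
  nlinarith [sq_nonneg ‖g‖]
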